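/- A congruence 𝔠 on the semigroup 𝐈ℕ∞ is a group congruence if and only if its restriction 𝔠 ∩ (𝒞_ℕ × 𝒞_ℕ) to the submonoid 𝒞_ℕ is not the identity (equality) relation on 𝒞_ℕ, i.e. if and only if there exist two distinct elements of 𝒞_ℕ that are 𝔠-equivalent. -/

import Mathlib

/-- Partial transformations of the set ℕ of positive integers. -/
abbrev PMapN : Type := ℕ+ → Option ℕ+

/-- The domain of a partial transformation. -/
def pdom (f : PMapN) : Set ℕ+ := {n | f n ≠ none}

/-- The range of a partial transformation. -/
def pran (f : PMapN) : Set ℕ+ := {m | ∃ n, f n = some m}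

/-- Composition of partial transformations: `pmul f g` applies `g` first and then `f`. -/
def pmul (f g : PMapN) : PMapN := fun n => (g n).bind f

/-- The identity transformation 𝕀 of ℕ. -/
def pid : PMapN := fun n => some n

/-- `f` is a partial bijection (an injective partial map). -/
def IsPartialBij (f : PMapN) : Prop :=
  ∀ ⦃m n a⦄, f m = some a → f n = some a → m = n

/-- `f` is a partial isometry with respect to the metric `d(m, n) = |m - n|`. -/
def IsIsometry (f : PMapN) : Prop :=
  ∀ ⦃m n a b⦄, f m = some a → f n = some b →
    |((a : ℕ) : ℤ) - ((b : ℕ) : ℤ)| = |((m : ℕ) : ℤ) - ((n : ℕ) : ℤ)|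

/-- Membership in the inverse monoid `𝐈ℕ∞` of partial cofinite isometries of ℕ:
a partial bijection of ℕ with cofinite domain and cofinite range preserving distances. -/
def InIN (f : PMapN) : Prop :=
  IsPartialBij f ∧ (pdom f)ᶜ.Finite ∧ (pran f)ᶜ.Finite ∧ IsIsometry f

/-- The partial translation `α₀ : n ↦ n + 1` with domain ℕ. -/
def alpha0 : PMapN := fun n => some (n + 1)

/-- The partial translation `β₀ : n ↦ n - 1` with domain `ℕ \ {1}`. -/
def beta0 : PMapN := fun n => if n = 1 then none else some (n - 1)

/-- Membership in the submonoid `𝒞_ℕ` of `𝐈ℕ∞` generated by `α₀` and `β₀`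
(isomorphic to the bicyclic monoid). -/
inductive InC : PMapN → Prop
  | one : InC pid
  | base_a : InC alpha0
  | base_b : InC beta0
  | mul : ∀ f g, InC f → InC g → InC (pmul f g)

/-- A congruence on the semigroup `𝐈ℕ∞`: an equivalence relation on its elements that is
compatible with multiplication on the left and on the right. -/
def IsCongr (r : PMapN → PMapN → Prop) : Prop :=
  (∀ f, InIN f → r f f) ∧
  (∀ f g, InIN f → InIN g → r f g → r g f) ∧
  (∀ f g h, InIN f → InIN g → InIN h → r f g → r g h → r f h) ∧
  (∀ f g c, InIN f → InIN g → InIN c → r f g →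
      r (pmul c f) (pmul c g) ∧ r (pmul f c) (pmul g c))

/-- A group congruence on `𝐈ℕ∞`: a congruence whose quotient semigroup is a group,
i.e. there is a group `G` and a multiplicative map `φ` of `𝐈ℕ∞` onto `G` whose kernel is
exactly the congruence. -/
def IsGroupCongr (r : PMapN → PMapN → Prop) : Prop :=
  IsCongr r ∧
  ∃ (G : Type) (_ : Group G) (φ : PMapN → G),
    (∀ f g, InIN f → InIN g → φ (pmul f g) = φ f * φ g) ∧
    (∀ x : G, ∃ f, InIN f ∧ φ f = x) ∧
    (∀ f g, InIN f → InIN g → (r f g ↔ φ f = φ g))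

-- auxiliary
abbrev mkP (x : ℕ) (h : 0 < x) : ℕ+ := ⟨x, h⟩

@[simp] lemma mkP_coe (x : ℕ) (h : 0 < x) : ((mkP x h : ℕ+) : ℕ) = x := (PNat.mk_coe x h).trans rfl

def cpq (p q : ℕ) : PMapN := fun n => if h : q < (n : ℕ) then some (mkP ((n : ℕ) - q + p) (by omega)) else none

lemma pneq {a b : ℕ+} (h : (a : ℕ) = (b : ℕ)) : a = b := PNat.coe_injective h

lemma pid_eq : pid = cpq 0 0 := by
  funext n
  simp only [pid, cpq]
  rw [dif_pos n.pos]
  congr 1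

lemma alpha0_eq : alpha0 = cpq 1 0 := by
  funext n
  simp only [alpha0, cpq]
  rw [dif_pos n.pos]
  congr 1

lemma beta0_eq : beta0 = cpq 0 1 := by
  funext n
  simp only [beta0, cpq]
  by_cases h : n = 1
  · subst h; rw [if_pos rfl, dif_neg (by norm_num)]
  · have h2 : 1 < (n : ℕ) := by
      have := n.pos; rcases Nat.lt_or_ge 1 (n : ℕ) with h' | h'
      · exact h'
      · exact absurd (pneq (by rw [PNat.one_coe]; omega)) h
    rw [if_neg h, dif_pos h2]
    congr 1
    apply pneq
    rw [PNat.sub_coe, if_pos (by exact_mod_cast h2)]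
    simp

lemma cmul (a b p q : ℕ) : pmul (cpq a b) (cpq p q) = cpq (a + (p - b)) (q + (b - p)) := by
  funext n
  simp only [pmul, cpq]
  by_cases h1 : q < (n : ℕ)
  · rw [dif_pos h1, Option.bind_some]
    simp only [cpq, mkP_coe]
    by_cases h2 : b < (n : ℕ) - q + p
    · rw [dif_pos h2, dif_pos (show q + (b - p) < (n : ℕ) by omega)]
      congr 1
      apply pneq; simp [PNat.mk_coe]; omega
    · rw [dif_neg h2, dif_neg (show ¬ (q + (b - p) < (n : ℕ)) by omega)]
  · rw [dif_neg h1, dif_neg (show ¬ (q + (b - p) < (n : ℕ)) by omega)]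
    rfl

lemma cpq_inj {p q s t : ℕ} (h : cpq p q = cpq s t) : p = s ∧ q = t := by
  have hq : q = t := by
    by_contra hne
    rcases Nat.lt_or_ge q t with hlt | hlt
    · have h1 := congrFun h (mkP (t) (by omega))
      simp only [cpq, PNat.mk_coe] at h1
      simp [hlt] at h1
    · have hlt : t < q := by omega
      have h1 := congrFun h (mkP (q) (by omega))
      simp only [cpq, PNat.mk_coe] at h1
      simp [hlt] at h1
  subst hq
  refine ⟨?_, rfl⟩
  have h1 := congrFun h (mkP (q + 1) (by omega))
  simp only [cpq, PNat.mk_coe] at h1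
  simp only [lt_add_one, ↓reduceDIte] at h1
  have h2 := congrArg (fun o : Option ℕ+ => o.map PNat.val) h1
  simp [PNat.mk_coe] at h2
  omega

lemma pmul_assoc (f g h : PMapN) : pmul (pmul f g) h = pmul f (pmul g h) := by
  funext n
  simp only [pmul]
  cases h n <;> rfl

lemma pid_pmul (f : PMapN) : pmul pid f = f := by
  funext n
  simp only [pmul, pid]
  cases f n <;> rfl

lemma pmul_pid (f : PMapN) : pmul f pid = f := rfl

lemma inIN_cpq (p q : ℕ) : InIN (cpq p q) := by
  refine ⟨?_, ?_, ?_, ?_⟩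
  · intro m n a hm hn
    simp only [cpq] at hm hn
    split_ifs at hm hn with h1 h2
    have hm' := congrArg (fun o : Option ℕ+ => o.map PNat.val) hm
    have hn' := congrArg (fun o : Option ℕ+ => o.map PNat.val) hn
    simp at hm' hn'
    apply pneq; omega
  · apply Set.Finite.subset (Set.Finite.preimage
      (Set.injOn_of_injective PNat.coe_injective) (Set.finite_Iic q))
    intro n hn
    simp only [Set.mem_compl_iff, pdom, Set.mem_setOf_eq, not_not, cpq] at hn
    simp only [Set.mem_preimage, Set.mem_Iic]
    by_contra hc
    rw [dif_pos (by omega)] at hn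
    exact nomatch hn
  · apply Set.Finite.subset (Set.Finite.preimage
      (Set.injOn_of_injective PNat.coe_injective) (Set.finite_Iic p))
    intro m hm
    simp only [Set.mem_compl_iff, pran, Set.mem_setOf_eq, cpq] at hm
    simp only [Set.mem_preimage, Set.mem_Iic]
    by_contra hc
    push_neg at hc
    apply hm
    refine ⟨⟨(m : ℕ) - p + q, by omega⟩, ?_⟩
    rw [dif_pos (by simp [PNat.mk_coe]; omega)]
    congr 1
    apply pneq
    simp [PNat.mk_coe]
    omega
  · intro m n a b hm hn
    simp only [cpq] at hm hn
    split_ifs at hm hn with h1 h2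
    have hm' := congrArg (fun o : Option ℕ+ => o.map PNat.val) hm
    have hn' := congrArg (fun o : Option ℕ+ => o.map PNat.val) hn
    simp at hm' hn'
    congr 1
    omega

lemma inIN_pid : InIN pid := pid_eq ▸ inIN_cpq 0 0

lemma inIN_pmul {f g : PMapN} (hf : InIN f) (hg : InIN g) : InIN (pmul f g) := by
  obtain ⟨fb, fd, fr, fi⟩ := hf
  obtain ⟨gb, gd, gr, gi⟩ := hg
  refine ⟨?_, ?_, ?_, ?_⟩
  · intro m n a hm hn
    simp only [pmul, Option.bind_eq_some_iff] at hm hn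
    obtain ⟨x, hx1, hx2⟩ := hm
    obtain ⟨y, hy1, hy2⟩ := hn
    have : x = y := fb hx2 hy2
    subst this
    exact gb hx1 hy1
  · have hfin1 : (⋃ a ∈ (pdom f)ᶜ, {n | g n = some a}).Finite :=
      Set.Finite.biUnion fd (fun a _ => Set.Subsingleton.finite
        (fun x hx y hy => gb hx hy))
    apply Set.Finite.subset (Set.Finite.union gd hfin1)
    intro n hn
    simp only [Set.mem_compl_iff, pdom, Set.mem_setOf_eq, not_not, pmul] at hn
    rcases he : g n with _ | a
    · exact Or.inl (by simp [pdom, he])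
    · refine Or.inr ?_
      rw [he, Option.bind_some] at hn
      exact Set.mem_biUnion (show a ∈ (pdom f)ᶜ by simp [pdom, hn])
        (show n ∈ {n | g n = some a} from he)
  · have hfin2 : (⋃ a ∈ (pran g)ᶜ, {m | f a = some m}).Finite :=
      Set.Finite.biUnion gr (fun a _ => Set.Subsingleton.finite
        (fun x hx y hy => by
          have hx' : f a = some x := hx
          have hy' : f a = some y := hy
          rw [hx'] at hy'
          exact Option.some.inj hy'))
    apply Set.Finite.subset (Set.Finite.union fr hfin2)
    intro m hm
    simp only [Set.mem_compl_iff, pran, Set.mem_setOf_eq, pmul] at hm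
    push_neg at hm
    by_cases hf' : ∃ a, f a = some m
    · obtain ⟨a, ha⟩ := hf'
      refine Or.inr (Set.mem_biUnion ?_ (show m ∈ {m | f a = some m} from ha))
      intro hc
      obtain ⟨n, hn⟩ := hc
      exact hm n (by rw [hn, Option.bind_some, ha])
    · exact Or.inl hf'
  · intro m n a b hm hn
    simp only [pmul, Option.bind_eq_some_iff] at hm hn
    obtain ⟨x, hx1, hx2⟩ := hm
    obtain ⟨y, hy1, hy2⟩ := hn
    calc |((a:ℕ):ℤ) - ((b:ℕ):ℤ)| = _ := fi hx2 hy2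
    _ = _ := gi hx1 hy1

open Classical in
noncomputable def idOn (A : Set ℕ+) : PMapN := fun n => if n ∈ A then some n else none

lemma idOn_pos {A : Set ℕ+} {n : ℕ+} (h : n ∈ A) : idOn A n = some n := by
  simp [idOn, h]

lemma idOn_neg {A : Set ℕ+} {n : ℕ+} (h : n ∉ A) : idOn A n = none := by
  simp [idOn, h]

lemma pdom_idOn (A : Set ℕ+) : pdom (idOn A) = A := by
  ext n
  by_cases h : n ∈ A <;> simp [pdom, idOn, h]

lemma pran_idOn (A : Set ℕ+) : pran (idOn A) = A := by
  ext n
  constructor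
  · rintro ⟨m, hm⟩
    by_cases h : m ∈ A
    · rw [idOn_pos h] at hm
      rw [← Option.some.inj hm]; exact h
    · rw [idOn_neg h] at hm; exact nomatch hm
  · intro h
    exact ⟨n, idOn_pos h⟩

lemma inIN_idOn {A : Set ℕ+} (hA : Aᶜ.Finite) : InIN (idOn A) := by
  refine ⟨?_, ?_, ?_, ?_⟩
  · intro m n a hm hn
    by_cases h1 : m ∈ A
    · by_cases h2 : n ∈ A
      · rw [idOn_pos h1] at hm; rw [idOn_pos h2] at hn
        rw [Option.some.inj hm, Option.some.inj hn]
      · rw [idOn_neg h2] at hn; exact nomatch hn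
    · rw [idOn_neg h1] at hm; exact nomatch hm
  · rw [pdom_idOn]; exact hA
  · rw [pran_idOn]; exact hA
  · intro m n a b hm hn
    by_cases h1 : m ∈ A
    · by_cases h2 : n ∈ A
      · rw [idOn_pos h1] at hm; rw [idOn_pos h2] at hn
        rw [Option.some.inj hm, Option.some.inj hn]
      · rw [idOn_neg h2] at hn; exact nomatch hn
    · rw [idOn_neg h1] at hm; exact nomatch hm

open Classical in
noncomputable def finv (f : PMapN) : PMapN :=
  fun m => if h : ∃ n, f n = some m then some h.choose else none

lemma finv_some {f : PMapN} {m n : ℕ+} (h : finv f m = some n) : f n = some m := by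
  simp only [finv] at h
  by_cases h1 : ∃ k, f k = some m
  · rw [dif_pos h1] at h
    rw [← Option.some.inj h]
    exact h1.choose_spec
  · rw [dif_neg h1] at h
    exact nomatch h

lemma finv_of_some {f : PMapN} (hb : IsPartialBij f) {m n : ℕ+} (h : f n = some m) :
    finv f m = some n := by
  have h1 : ∃ k, f k = some m := ⟨n, h⟩
  simp only [finv, dif_pos h1]
  exact congrArg some (hb h1.choose_spec h)

lemma pmul_finv {f : PMapN} : pmul f (finv f) = idOn (pran f) := by
  funext m
  by_cases h : ∃ n, f n = some m
  · rw [idOn_pos h]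
    simp only [pmul, finv, dif_pos h, Option.bind_some]
    exact h.choose_spec
  · rw [idOn_neg h]
    simp only [pmul, finv, dif_neg h, Option.bind_none]

lemma finv_pmul {f : PMapN} (hb : IsPartialBij f) : pmul (finv f) f = idOn (pdom f) := by
  funext n
  rcases he : f n with _ | a
  · rw [idOn_neg (by simp [pdom, he]), pmul, he, Option.bind_none]
  · rw [idOn_pos (by simp [pdom, he]), pmul, he, Option.bind_some]
    exact finv_of_some hb he

lemma inIN_finv {f : PMapN} (hf : InIN f) : InIN (finv f) := by
  obtain ⟨fb, fd, fr, fi⟩ := hf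
  have hdom : pdom (finv f) = pran f := by
    ext m
    by_cases h : ∃ n, f n = some m <;> simp [pdom, pran, finv, h]
  have hran : pran (finv f) = pdom f := by
    ext n
    constructor
    · rintro ⟨m, hm⟩
      have := finv_some hm
      simp [pdom, this]
    · intro h
      rcases he : f n with _ | a
      · exact absurd he h
      · exact ⟨a, finv_of_some fb he⟩
  refine ⟨?_, ?_, ?_, ?_⟩
  · intro m n a hm hn
    have h1 := finv_some hm
    have h2 := finv_some hn
    rw [h1] at h2
    exact Option.some.inj h2
  · rw [hdom]; exact fr
  · rw [hran]; exact fd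
  · intro m n a b hm hn
    exact (fi (finv_some hm) (finv_some hn)).symm

lemma inC_form {f : PMapN} (h : InC f) : ∃ p q, f = cpq p q := by
  induction h with
  | one => exact ⟨0, 0, pid_eq⟩
  | base_a => exact ⟨1, 0, alpha0_eq⟩
  | base_b => exact ⟨0, 1, beta0_eq⟩
  | mul f g hf hg ihf ihg =>
    obtain ⟨p, q, rfl⟩ := ihf
    obtain ⟨s, t, rfl⟩ := ihg
    exact ⟨_, _, cmul p q s t⟩

section congr_lemmas

variable {r : PMapN → PMapN → Prop}

lemma rsymc (hr : IsCongr r) {a b c d : ℕ} (h : r (cpq a b) (cpq c d)) :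
    r (cpq c d) (cpq a b) := hr.2.1 _ _ (inIN_cpq a b) (inIN_cpq c d) h

lemma rtransc (hr : IsCongr r) {a b c d e f : ℕ} (h1 : r (cpq a b) (cpq c d))
    (h2 : r (cpq c d) (cpq e f)) : r (cpq a b) (cpq e f) :=
  hr.2.2.1 _ _ _ (inIN_cpq a b) (inIN_cpq c d) (inIN_cpq e f) h1 h2

lemma csandwich (hr : IsCongr r) {p q s t : ℕ} (h : r (cpq p q) (cpq s t)) (a b u v : ℕ) :
    r (pmul (pmul (cpq a b) (cpq p q)) (cpq u v))
      (pmul (pmul (cpq a b) (cpq s t)) (cpq u v)) := by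
  have h1 := (hr.2.2.2 _ _ _ (inIN_cpq p q) (inIN_cpq s t) (inIN_cpq a b) h).1
  exact (hr.2.2.2 _ _ _ (inIN_pmul (inIN_cpq a b) (inIN_cpq p q))
    (inIN_pmul (inIN_cpq a b) (inIN_cpq s t)) (inIN_cpq u v) h1).2

lemma stepLT (hr : IsCongr r) {U V : ℕ} (hC : r (cpq U U) (cpq V V)) (h : U < V) :
    r (cpq 0 0) (cpq (V - U) (V - U)) := by
  have h1 := csandwich hr hC 0 U U 0
  rw [cmul, cmul, cmul, cmul] at h1
  convert h1 using 2 <;> omega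

lemma stepUV (hr : IsCongr r) {U V : ℕ} (h : r (cpq 0 0) (cpq U V))
    (hUV : ¬(U = 0 ∧ V = 0)) : ∃ d, 0 < d ∧ r (cpq 0 0) (cpq d d) := by
  by_cases huv : U = V
  · subst huv
    exact ⟨U, by omega, h⟩
  · -- r (cpq V U) (cpq U U) and r (cpq V U) (cpq V V), hence r (cpq U U) (cpq V V)
    have hA := (hr.2.2.2 _ _ _ (inIN_cpq 0 0) (inIN_cpq U V) (inIN_cpq V U) h).2
    rw [cmul, cmul] at hA
    have hA' : r (cpq V U) (cpq U U) := by convert hA using 2 <;> omega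
    have hB := (hr.2.2.2 _ _ _ (inIN_cpq 0 0) (inIN_cpq U V) (inIN_cpq V U) h).1
    rw [cmul, cmul] at hB
    have hB' : r (cpq V U) (cpq V V) := by convert hB using 2 <;> omega
    have hC : r (cpq U U) (cpq V V) := rtransc hr (rsymc hr hA') hB'
    rcases Nat.lt_or_ge U V with hlt | hge
    · exact ⟨V - U, by omega, stepLT hr hC hlt⟩
    · have hlt : V < U := by omega
      exact ⟨U - V, by omega, stepLT hr (rsymc hr hC) hlt⟩

lemma main_d (hr : IsCongr r) {p q s t : ℕ} (h : r (cpq p q) (cpq s t))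
    (hne : ¬(p = s ∧ q = t)) : ∃ d, 0 < d ∧ r (cpq 0 0) (cpq d d) := by
  have h1 := csandwich hr h 0 p q 0
  rw [cmul, cmul, cmul, cmul] at h1
  set U := 0 + (p - p) + (s - p) + (q - (t + (p - s))) with hU
  by_cases hX : (0 + (s - p) + (q - (t + (p - s))) = 0 ∧ (t + (p - s)) - q = 0)
  · -- X = pid; use the symmetric sandwich
    have h2 := csandwich hr h 0 s t 0
    rw [cmul, cmul, cmul, cmul] at h2
    have h2' : r (cpq (p - s) (p - s)) (cpq 0 0) := by convert h2 using 2 <;> omega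
    exact ⟨p - s, by omega, rsymc hr h2'⟩
  · have h1' : r (cpq 0 0) (cpq (0 + (s - p) + (q - (t + (p - s)))) ((t + (p - s)) - q)) := by
      convert h1 using 2 <;> omega
    exact stepUV hr h1' hX

lemma all_idem (hr : IsCongr r) {d : ℕ} (hd : 0 < d) (h : r (cpq 0 0) (cpq d d)) :
    ∀ k, r (cpq 0 0) (cpq k k) := by
  have conj : ∀ j, r (cpq j j) (cpq (j + d) (j + d)) := by
    intro j
    have h1 := csandwich hr h j 0 0 j
    rw [cmul, cmul, cmul, cmul] at h1
    convert h1 using 2 <;> omega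
  have pow : ∀ m, r (cpq 0 0) (cpq (m * d) (m * d)) := by
    intro m
    induction m with
    | zero => simpa using hr.1 _ (inIN_cpq 0 0)
    | succ m ih =>
      have h2 := conj (m * d)
      have h3 : r (cpq 0 0) (cpq (m * d + d) (m * d + d)) := rtransc hr ih h2
      convert h3 using 2 <;> (rw [Nat.succ_mul])
  intro k
  have h2 := pow k
  have h3 := (hr.2.2.2 _ _ _ (inIN_cpq 0 0) (inIN_cpq (k * d) (k * d)) (inIN_cpq k k) h2).1
  rw [cmul, cmul] at h3
  have hk : k ≤ k * d := Nat.le_mul_of_pos_right k hd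
  have h3' : r (cpq k k) (cpq (k * d) (k * d)) := by convert h3 using 2 <;> omega
  exact rtransc hr h2 (rsymc hr h3')

end congr_lemmas

lemma r_idOn {r : PMapN → PMapN → Prop} (hr : IsCongr r)
    (hcc : ∀ k, r (cpq 0 0) (cpq k k)) {A : Set ℕ+} (hA : Aᶜ.Finite) :
    r (idOn A) pid := by
  obtain ⟨k, hk⟩ := (hA.image PNat.val).bddAbove
  have hmem : ∀ n : ℕ+, k < (n : ℕ) → n ∈ A := by
    intro n hn
    by_contra hc
    exact absurd (hk (Set.mem_image_of_mem _ hc)) (by omega)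
  have heq : pmul (idOn A) (cpq k k) = cpq k k := by
    funext n
    simp only [pmul, cpq]
    by_cases h1 : k < (n : ℕ)
    · rw [dif_pos h1, Option.bind_some]
      exact idOn_pos (hmem _ (by simp [PNat.mk_coe]; omega))
    · rw [dif_neg h1, Option.bind_none]
  have h1 := (hr.2.2.2 _ _ _ (inIN_cpq 0 0) (inIN_cpq k k) (inIN_idOn hA) (hcc k)).1
  rw [← pid_eq, pmul_pid, heq] at h1
  have h2 := hr.2.1 _ _ (inIN_cpq 0 0) (inIN_cpq k k) (hcc k)
  rw [← pid_eq] at h2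
  exact hr.2.2.1 _ _ _ (inIN_idOn hA) (inIN_cpq k k) inIN_pid h1 h2

lemma rinv {r : PMapN → PMapN → Prop} (hr : IsCongr r)
    (hcc : ∀ k, r (cpq 0 0) (cpq k k)) {f : PMapN} (hf : InIN f) :
    r (pmul (finv f) f) pid ∧ r (pmul f (finv f)) pid := by
  rw [finv_pmul hf.1, pmul_finv]
  exact ⟨r_idOn hr hcc hf.2.1, r_idOn hr hcc hf.2.2.1⟩


/-- A congruence `𝔠` on `𝐈ℕ∞` is a group congruence if and only if its
restriction to the submonoid `𝒞_ℕ` is not the identity relation, i.e. iff there are two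
distinct elements of `𝒞_ℕ` that are `𝔠`-equivalent. -/
theorem stmt17 (r : PMapN → PMapN → Prop) (hr : IsCongr r) :
    IsGroupCongr r ↔ ∃ a b, InC a ∧ InC b ∧ a ≠ b ∧ r a b := by
  constructor
  · rintro ⟨-, G, _, φ, hmul, hsurj, hker⟩
    have hal : InIN alpha0 := alpha0_eq ▸ inIN_cpq 1 0
    have hbe : InIN beta0 := beta0_eq ▸ inIN_cpq 0 1
    refine ⟨pmul alpha0 beta0, pid, InC.mul _ _ InC.base_a InC.base_b, InC.one, ?_, ?_⟩
    · rw [alpha0_eq, beta0_eq, cmul, pid_eq]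
      intro hce
      have := cpq_inj hce
      omega
    · have h1 : φ pid = 1 := by
        have h := hmul pid pid inIN_pid inIN_pid
        rw [pmul_pid] at h
        exact mul_left_cancel (a := φ pid) (by rw [mul_one]; exact h.symm)
      have hba : φ beta0 * φ alpha0 = 1 := by
        have h2 := hmul beta0 alpha0 hbe hal
        have h3 : pmul beta0 alpha0 = pid := by
          rw [alpha0_eq, beta0_eq, cmul, pid_eq]
        rw [h3, h1] at h2
        exact h2.symm
      have hab : φ alpha0 * φ beta0 = 1 := by
        have h4 : φ beta0 = (φ alpha0)⁻¹ := eq_inv_of_mul_eq_one_left hba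
        rw [h4, mul_inv_cancel]
      apply (hker _ _ (inIN_pmul hal hbe) inIN_pid).mpr
      rw [hmul _ _ hal hbe, hab, h1]
  · rintro ⟨a, b, ha, hb, hne, hab⟩
    classical
    obtain ⟨p, q, rfl⟩ := inC_form ha
    obtain ⟨s, t, rfl⟩ := inC_form hb
    have hne' : ¬(p = s ∧ q = t) := fun h => hne (by rw [h.1, h.2])
    obtain ⟨d, hd, hdd⟩ := main_d hr hab hne'
    have hcc := all_idem hr hd hdd
    refine ⟨hr, ?_⟩
    letI sd : Setoid {f : PMapN // InIN f} :=
      ⟨fun f g => r f.1 g.1,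
        ⟨fun f => hr.1 _ f.2, fun {f g} h => hr.2.1 _ _ f.2 g.2 h,
         fun {f g h} h1 h2 => hr.2.2.1 _ _ _ f.2 g.2 h.2 h1 h2⟩⟩
    have hcompat : ∀ (f f' : {f : PMapN // InIN f}), f ≈ f' →
        ∀ (g g' : {f : PMapN // InIN f}), g ≈ g' →
        (⟨pmul f.1 g.1, inIN_pmul f.2 g.2⟩ : {f : PMapN // InIN f}) ≈
          ⟨pmul f'.1 g'.1, inIN_pmul f'.2 g'.2⟩ := by
      intro f f' hf g g' hg
      have s1 : r (pmul f.1 g.1) (pmul f'.1 g.1) :=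
        (hr.2.2.2 _ _ _ f.2 f'.2 g.2 hf).2
      have s2 : r (pmul f'.1 g.1) (pmul f'.1 g'.1) :=
        (hr.2.2.2 _ _ _ g.2 g'.2 f'.2 hg).1
      exact hr.2.2.1 _ _ _ (inIN_pmul f.2 g.2) (inIN_pmul f'.2 g.2)
        (inIN_pmul f'.2 g'.2) s1 s2
    letI : Mul (Quotient sd) :=
      ⟨Quotient.map₂ (fun f g => ⟨pmul f.1 g.1, inIN_pmul f.2 g.2⟩) hcompat⟩
    letI : One (Quotient sd) := ⟨Quotient.mk sd ⟨pid, inIN_pid⟩⟩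
    have hmulmk : ∀ (f g : {f : PMapN // InIN f}),
        (Quotient.mk sd f) * (Quotient.mk sd g) =
          Quotient.mk sd ⟨pmul f.1 g.1, inIN_pmul f.2 g.2⟩ := fun f g => rfl
    have hinvex : ∀ x : Quotient sd, ∃ y, y * x = 1 := by
      refine Quotient.ind ?_
      intro f
      refine ⟨Quotient.mk sd ⟨finv f.1, inIN_finv f.2⟩, ?_⟩
      rw [hmulmk]
      apply Quotient.sound
      exact (rinv hr hcc f.2).1
    letI : Inv (Quotient sd) := ⟨fun x => Classical.choose (hinvex x)⟩
    letI : Group (Quotient sd) := Group.ofLeftAxioms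
      (by
        refine Quotient.ind ?_
        intro a
        refine Quotient.ind ?_
        intro b
        refine Quotient.ind ?_
        intro c
        rw [hmulmk, hmulmk, hmulmk, hmulmk]
        exact congrArg _ (Subtype.ext (pmul_assoc a.1 b.1 c.1)))
      (by
        refine Quotient.ind ?_
        intro a
        rw [show (1 : Quotient sd) = Quotient.mk sd ⟨pid, inIN_pid⟩ from rfl, hmulmk]
        exact congrArg _ (Subtype.ext (pid_pmul a.1)))
      (fun a => Classical.choose_spec (hinvex a))
    refine ⟨Quotient sd, inferInstance, fun f => if h : InIN f then Quotient.mk sd ⟨f, h⟩ else 1,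
      ?_, ?_, ?_⟩
    · intro f g hf hg
      beta_reduce
      rw [dif_pos hf, dif_pos hg, dif_pos (inIN_pmul hf hg), hmulmk]
    · refine Quotient.ind ?_
      intro f
      exact ⟨f.1, f.2, by beta_reduce; rw [dif_pos f.2]⟩
    · intro f g hf hg
      beta_reduce
      rw [dif_pos hf, dif_pos hg]
      constructor
      · intro h
        exact Quotient.sound h
      · intro h
        exact Quotient.exact h
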